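/- For square real matrices A, B of size n×n, if A B = B A then rank(A + B) ≤ rank(A) + rank(B) − rank(A B). -/

import Mathlib

open Matrix

/-- The nuclear norm of a real matrix: the sum of its singular values,
i.e. the sum of the square roots of the eigenvalues of `Aᵀ * A`. -/
noncomputable def nuclearNorm {m n : Type*} [Fintype m] [Fintype n] [DecidableEq n]
    (A : Matrix m n ℝ) : ℝ :=
  ∑ i, Real.sqrt ((show (Aᵀ * A).IsHermitian by
    rw [Matrix.IsHermitian, Matrix.conjTranspose_eq_transpose_of_trivial,
      Matrix.transpose_mul, Matrix.transpose_transpose]).eigenvalues i)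

/-- `P` is the Moore–Penrose pseudo-inverse of `X`. -/
def IsMoorePenroseInv {m n : Type*} [Fintype m] [Fintype n]
    (X : Matrix m n ℝ) (P : Matrix n m ℝ) : Prop :=
  X * P * X = X ∧ P * X * P = P ∧ (X * P)ᵀ = X * P ∧ (P * X)ᵀ = P * X

/-- `(U, σ, V)` is a skinny SVD of `X`: `U` and `V` have orthonormal columns,
`σ` lists the (positive) nonzero singular values, `X = U * diagonal σ * Vᵀ`,
and the number of columns of `U` and `V` is `rank X`. -/
def IsSkinnySVD {m n r : ℕ} (X : Matrix (Fin m) (Fin n) ℝ)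
    (U : Matrix (Fin m) (Fin r) ℝ) (σ : Fin r → ℝ) (V : Matrix (Fin n) (Fin r) ℝ) : Prop :=
  Uᵀ * U = 1 ∧ Vᵀ * V = 1 ∧ (∀ i, 0 < σ i) ∧
    X = U * Matrix.diagonal σ * Vᵀ ∧ r = X.rank

/-- For commuting square matrices, `rank (A + B) ≤ rank A + rank B − rank (A B)`
(stated additively to avoid truncated subtraction). -/
theorem stmt4 {n : ℕ} (A B : Matrix (Fin n) (Fin n) ℝ) (h : A * B = B * A) :
    (A + B).rank + (A * B).rank ≤ A.rank + B.rank := by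
  classical
  set RA := LinearMap.range A.mulVecLin
  set RB := LinearMap.range B.mulVecLin
  have hAB : LinearMap.range (A * B).mulVecLin ≤ RA ⊓ RB := by
    refine le_inf ?_ ?_
    · rw [Matrix.mulVecLin_mul]
      exact LinearMap.range_comp_le_range _ _
    · rw [h, Matrix.mulVecLin_mul]
      exact LinearMap.range_comp_le_range _ _
  have hsum : LinearMap.range (A + B).mulVecLin ≤ RA ⊔ RB := by
    rintro x ⟨v, rfl⟩
    rw [Matrix.mulVecLin_add]
    exact Submodule.add_mem_sup ⟨v, rfl⟩ ⟨v, rfl⟩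
  have key := Submodule.finrank_sup_add_finrank_inf_eq RA RB
  have h1 : (A + B).rank ≤ Module.finrank ℝ ↥(RA ⊔ RB) :=
    Submodule.finrank_mono hsum
  have h2 : (A * B).rank ≤ Module.finrank ℝ ↥(RA ⊓ RB) :=
    Submodule.finrank_mono hAB
  calc (A + B).rank + (A * B).rank
      ≤ Module.finrank ℝ ↥(RA ⊔ RB) + Module.finrank ℝ ↥(RA ⊓ RB) :=
        Nat.add_le_add h1 h2
    _ = A.rank + B.rank := key
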